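/- Let d ≥ 1 and let r, t : Fin d → ℝ be nonnegative and nonincreasing. Define vectors ψ, φ ∈ ℂ^{Fin d × Fin d} by ψ(i,j) = √(r i) if i = j and 0 otherwise, and φ(i,j) = √(t i) if i = j and 0 otherwise. Then the supremum over pairs of unitary d×d complex matrices U, V of |⟨ψ, (U ⊗ V)·φ⟩|² equals (Σ_{i=1}^d √(r i · t i))², where U ⊗ V is the Kronecker product acting on ℂ^{Fin d × Fin d} by matrix–vector multiplication and ⟨·,·⟩ is the standard Hermitian inner product. (This is the optimal fidelity for converting the bipartite pure state with ordered Schmidt coefficients √(t i) into the one with ordered Schmidt coefficients √(r i) using local unitaries and no communication.) -/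

import Mathlib

open Finset

lemma tele (d : ℕ) (a : ℕ → ℝ) (had : a d = 0) (i : ℕ) (hi : i ≤ d) :
    a i = ∑ k ∈ Ico i d, (a k - a (k + 1)) := by
  rw [Finset.sum_Ico_eq_sum_range]
  simp only [add_assoc]
  have := Finset.sum_range_sub' (fun j => a (i + j)) (d - i)
  simp only [add_zero] at this
  rw [this, Nat.add_sub_cancel' hi, had, sub_zero]

lemma IcoFilter (d i : ℕ) : Ico i d = (range d).filter (fun k => i ≤ k) := by
  ext k; simp [Finset.mem_filter, and_comm]

lemma sum_swap4 {M : Type*} [AddCommMonoid M] (s t u v : Finset ℕ)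
    (f : ℕ → ℕ → ℕ → ℕ → M) :
    ∑ i ∈ s, ∑ j ∈ t, ∑ k ∈ u, ∑ l ∈ v, f i j k l
    = ∑ k ∈ u, ∑ l ∈ v, ∑ i ∈ s, ∑ j ∈ t, f i j k l := by
  trans ∑ i ∈ s, ∑ k ∈ u, ∑ j ∈ t, ∑ l ∈ v, f i j k l
  · exact Finset.sum_congr rfl fun i _ => Finset.sum_comm
  trans ∑ k ∈ u, ∑ i ∈ s, ∑ j ∈ t, ∑ l ∈ v, f i j k l
  · exact Finset.sum_comm
  apply Finset.sum_congr rfl; intro k _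
  trans ∑ i ∈ s, ∑ l ∈ v, ∑ j ∈ t, f i j k l
  · exact Finset.sum_congr rfl fun i _ => Finset.sum_comm
  exact Finset.sum_comm

lemma sum_swap3 {M : Type*} [AddCommMonoid M] (s u v : Finset ℕ)
    (f : ℕ → ℕ → ℕ → M) :
    ∑ i ∈ s, ∑ k ∈ u, ∑ l ∈ v, f i k l
    = ∑ k ∈ u, ∑ l ∈ v, ∑ i ∈ s, f i k l := by
  trans ∑ k ∈ u, ∑ i ∈ s, ∑ l ∈ v, f i k l
  · exact Finset.sum_comm
  exact Finset.sum_congr rfl fun k _ => Finset.sum_comm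

lemma key_nat (d : ℕ) (a b : ℕ → ℝ) (D : ℕ → ℕ → ℝ)
    (ha0 : ∀ i, 0 ≤ a i) (hb0 : ∀ i, 0 ≤ b i)
    (ha : ∀ i, a (i + 1) ≤ a i) (hb : ∀ i, b (i + 1) ≤ b i)
    (had : a d = 0) (hbd : b d = 0)
    (hD0 : ∀ i j, 0 ≤ D i j)
    (hrow : ∀ i, ∑ j ∈ range d, D i j ≤ 1)
    (hcol : ∀ j, ∑ i ∈ range d, D i j ≤ 1) :
    ∑ i ∈ range d, ∑ j ∈ range d, a i * b j * D i j
      ≤ ∑ i ∈ range d, a i * b i := by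
  set α : ℕ → ℝ := fun k => a k - a (k + 1) with hα
  set β : ℕ → ℝ := fun l => b l - b (l + 1) with hβ
  have hα0 : ∀ k, 0 ≤ α k := fun k => sub_nonneg.2 (ha k)
  have hβ0 : ∀ l, 0 ≤ β l := fun l => sub_nonneg.2 (hb l)
  have hai : ∀ i ∈ range d, a i = ∑ k ∈ range d, (if i ≤ k then α k else 0) := by
    intro i hi
    rw [← Finset.sum_filter, ← IcoFilter]
    exact tele d a had i (le_of_lt (Finset.mem_range.1 hi))
  have hbi : ∀ j ∈ range d, b j = ∑ l ∈ range d, (if j ≤ l then β l else 0) := by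
    intro j hj
    rw [← Finset.sum_filter, ← IcoFilter]
    exact tele d b hbd j (le_of_lt (Finset.mem_range.1 hj))
  have LHS : ∑ i ∈ range d, ∑ j ∈ range d, a i * b j * D i j
      = ∑ k ∈ range d, ∑ l ∈ range d, α k * β l *
          (∑ i ∈ range d, ∑ j ∈ range d,
            if i ≤ k ∧ j ≤ l then D i j else 0) := by
    trans ∑ i ∈ range d, ∑ j ∈ range d, ∑ k ∈ range d, ∑ l ∈ range d,
        α k * β l * (if i ≤ k ∧ j ≤ l then D i j else 0)
    · apply Finset.sum_congr rfl; intro i hi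
      apply Finset.sum_congr rfl; intro j hj
      rw [hai i hi, hbi j hj, Finset.sum_mul_sum, Finset.sum_mul]
      apply Finset.sum_congr rfl; intro k hk
      rw [Finset.sum_mul]
      apply Finset.sum_congr rfl; intro l hl
      by_cases h1 : i ≤ k <;> by_cases h2 : j ≤ l <;> simp [h1, h2] <;> ring
    · rw [sum_swap4]
      apply Finset.sum_congr rfl; intro k _
      apply Finset.sum_congr rfl; intro l _
      rw [Finset.mul_sum]
      apply Finset.sum_congr rfl; intro i _
      rw [Finset.mul_sum]
  have RHS : ∑ i ∈ range d, a i * b i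
      = ∑ k ∈ range d, ∑ l ∈ range d, α k * β l *
          (∑ i ∈ range d, if i ≤ k ∧ i ≤ l then (1:ℝ) else 0) := by
    trans ∑ i ∈ range d, ∑ k ∈ range d, ∑ l ∈ range d,
        α k * β l * (if i ≤ k ∧ i ≤ l then (1:ℝ) else 0)
    · apply Finset.sum_congr rfl; intro i hi
      rw [hai i hi, hbi i hi, Finset.sum_mul_sum]
      apply Finset.sum_congr rfl; intro k hk
      apply Finset.sum_congr rfl; intro l hl
      by_cases h1 : i ≤ k <;> by_cases h2 : i ≤ l <;> simp [h1, h2] <;> ring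
    · rw [sum_swap3]
      apply Finset.sum_congr rfl; intro k _
      apply Finset.sum_congr rfl; intro l _
      rw [Finset.mul_sum]
  rw [LHS, RHS]
  apply Finset.sum_le_sum; intro k hk
  apply Finset.sum_le_sum; intro l hl
  apply mul_le_mul_of_nonneg_left _ (mul_nonneg (hα0 k) (hβ0 l))
  have hT : ∑ i ∈ range d, (if i ≤ k ∧ i ≤ l then (1:ℝ) else 0)
      = (min k l + 1 : ℕ) := by
    rw [Finset.sum_boole]
    congr 1
    have : (range d).filter (fun i => i ≤ k ∧ i ≤ l) = range (min k l + 1) := by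
      ext i
      have hkd := Finset.mem_range.1 hk
      simp only [Finset.mem_filter, Finset.mem_range]
      omega
    rw [this, Finset.card_range]
  have hSk : ∑ i ∈ range d, ∑ j ∈ range d, (if i ≤ k ∧ j ≤ l then D i j else 0)
      ≤ (k + 1 : ℕ) := by
    calc ∑ i ∈ range d, ∑ j ∈ range d, (if i ≤ k ∧ j ≤ l then D i j else 0)
        ≤ ∑ i ∈ range d, (if i ≤ k then (1:ℝ) else 0) := by
          apply Finset.sum_le_sum; intro i _
          by_cases h1 : i ≤ k
          · simp only [h1, true_and, if_true]
            calc ∑ j ∈ range d, (if j ≤ l then D i j else 0)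
                ≤ ∑ j ∈ range d, D i j := by
                  apply Finset.sum_le_sum; intro j _
                  split <;> simp [hD0]
              _ ≤ 1 := hrow i
          · simp [h1, le_refl]
      _ = ((range d).filter (fun i => i ≤ k)).card := by rw [Finset.sum_boole]
      _ ≤ (k + 1 : ℕ) := by
          norm_cast
          have : (range d).filter (fun i => i ≤ k) ⊆ range (k + 1) := by
            intro i hi
            simp only [Finset.mem_filter] at hi
            simp [Nat.lt_succ_iff, hi.2]
          simpa using Finset.card_le_card this
  have hSl : ∑ i ∈ range d, ∑ j ∈ range d, (if i ≤ k ∧ j ≤ l then D i j else 0)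
      ≤ (l + 1 : ℕ) := by
    rw [Finset.sum_comm]
    calc ∑ j ∈ range d, ∑ i ∈ range d, (if i ≤ k ∧ j ≤ l then D i j else 0)
        ≤ ∑ j ∈ range d, (if j ≤ l then (1:ℝ) else 0) := by
          apply Finset.sum_le_sum; intro j _
          by_cases h2 : j ≤ l
          · simp only [h2, and_true, if_true]
            calc ∑ i ∈ range d, (if i ≤ k then D i j else 0)
                ≤ ∑ i ∈ range d, D i j := by
                  apply Finset.sum_le_sum; intro i _
                  split <;> simp [hD0]
              _ ≤ 1 := hcol j
          · simp [h2]
      _ = ((range d).filter (fun j => j ≤ l)).card := by rw [Finset.sum_boole]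
      _ ≤ (l + 1 : ℕ) := by
          norm_cast
          have : (range d).filter (fun j => j ≤ l) ⊆ range (l + 1) := by
            intro j hj
            simp only [Finset.mem_filter] at hj
            simp [Nat.lt_succ_iff, hj.2]
          simpa using Finset.card_le_card this
  rw [hT]
  rcases le_total k l with h | h
  · rw [min_eq_left h]; exact hSk
  · rw [min_eq_right h]; exact hSl

lemma finsum_ext (d : ℕ) (g : Fin d → ℝ) :
    ∑ i, g i = ∑ n ∈ range d, (if h : n < d then g ⟨n, h⟩ else 0) := by
  rw [← Fin.sum_univ_eq_sum_range (fun n => if h : n < d then g ⟨n, h⟩ else 0) d]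
  exact Finset.sum_congr rfl fun i _ => by simp [i.isLt]

lemma key_fin (d : ℕ) (a b : Fin d → ℝ) (ha0 : ∀ i, 0 ≤ a i) (hb0 : ∀ i, 0 ≤ b i)
    (ha : Antitone a) (hb : Antitone b)
    (D : Fin d → Fin d → ℝ) (hD0 : ∀ i j, 0 ≤ D i j)
    (hrow : ∀ i, ∑ j, D i j ≤ 1) (hcol : ∀ j, ∑ i, D i j ≤ 1) :
    ∑ i, ∑ j, a i * b j * D i j ≤ ∑ i, a i * b i := by
  set a' : ℕ → ℝ := fun n => if h : n < d then a ⟨n, h⟩ else 0 with ha'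
  set b' : ℕ → ℝ := fun n => if h : n < d then b ⟨n, h⟩ else 0 with hb'
  set D' : ℕ → ℕ → ℝ :=
    fun n m => if h : n < d ∧ m < d then D ⟨n, h.1⟩ ⟨m, h.2⟩ else 0 with hD'
  have ha'0 : ∀ n, 0 ≤ a' n := by intro n; simp only [ha']; split <;> simp [ha0]
  have hb'0 : ∀ n, 0 ≤ b' n := by intro n; simp only [hb']; split <;> simp [hb0]
  have ha'mono : ∀ n, a' (n + 1) ≤ a' n := by
    intro n; simp only [ha']
    split
    · next h1 =>
      rw [dif_pos (Nat.lt_of_succ_lt h1)]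
      exact ha (by simp [Fin.le_def])
    · next h1 =>
      split
      · exact ha0 _
      · exact le_refl 0
  have hb'mono : ∀ n, b' (n + 1) ≤ b' n := by
    intro n; simp only [hb']
    split
    · next h1 =>
      rw [dif_pos (Nat.lt_of_succ_lt h1)]
      exact hb (by simp [Fin.le_def])
    · next h1 =>
      split
      · exact hb0 _
      · exact le_refl 0
  have ha'd : a' d = 0 := by simp [ha']
  have hb'd : b' d = 0 := by simp [hb']
  have hD'0 : ∀ n m, 0 ≤ D' n m := by
    intro n m; simp only [hD']; split <;> simp [hD0]
  have hrow' : ∀ n, ∑ m ∈ range d, D' n m ≤ 1 := by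
    intro n
    by_cases hn : n < d
    · calc ∑ m ∈ range d, D' n m = ∑ j, D ⟨n, hn⟩ j := by
            rw [finsum_ext d (fun j => D ⟨n, hn⟩ j)]
            apply Finset.sum_congr rfl; intro m hm
            have hm' := Finset.mem_range.1 hm
            simp [hD', hn, hm']
        _ ≤ 1 := hrow _
    · have : ∀ m, D' n m = 0 := by intro m; simp [hD', hn]
      simp [this]
  have hcol' : ∀ m, ∑ n ∈ range d, D' n m ≤ 1 := by
    intro m
    by_cases hm : m < d
    · calc ∑ n ∈ range d, D' n m = ∑ i, D i ⟨m, hm⟩ := by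
            rw [finsum_ext d (fun i => D i ⟨m, hm⟩)]
            apply Finset.sum_congr rfl; intro n hn
            have hn' := Finset.mem_range.1 hn
            simp [hD', hm, hn']
        _ ≤ 1 := hcol _
    · have : ∀ n, D' n m = 0 := by intro n; simp [hD', hm]
      simp [this]
  have key := key_nat d a' b' D' ha'0 hb'0 ha'mono hb'mono ha'd hb'd hD'0 hrow' hcol'
  calc ∑ i, ∑ j, a i * b j * D i j
      = ∑ n ∈ range d, ∑ m ∈ range d, a' n * b' m * D' n m := by
        rw [finsum_ext d (fun i => ∑ j, a i * b j * D i j)]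
        apply Finset.sum_congr rfl; intro n hn
        have hn' := Finset.mem_range.1 hn
        rw [dif_pos hn', finsum_ext d (fun j => a ⟨n, hn'⟩ * b j * D ⟨n, hn'⟩ j)]
        apply Finset.sum_congr rfl; intro m hm
        have hm' := Finset.mem_range.1 hm
        simp [ha', hb', hD', hn', hm']
    _ ≤ ∑ n ∈ range d, a' n * b' n := key
    _ = ∑ i, a i * b i := by
        rw [finsum_ext d (fun i => a i * b i)]
        apply Finset.sum_congr rfl; intro n hn
        have hn' := Finset.mem_range.1 hn
        simp [ha', hb', hn']


open Matrix
open scoped Kronecker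

lemma inner_eq (d : ℕ) (r t : Fin d → ℝ) (U V : Matrix (Fin d) (Fin d) ℂ) :
    ∑ y : Fin d × Fin d, (starRingEnd ℂ) (if y.1 = y.2 then (Real.sqrt (r y.1) : ℂ) else 0) *
        ((U ⊗ₖ V) *ᵥ (fun z : Fin d × Fin d =>
          if z.1 = z.2 then (Real.sqrt (t z.1) : ℂ) else 0)) y
    = ∑ i, ∑ j, (Real.sqrt (r i) : ℂ) * (U i j * V i j * Real.sqrt (t j)) := by
  rw [Fintype.sum_prod_type]
  simp only [Matrix.mulVec, dotProduct, Fintype.sum_prod_type,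
    Matrix.kroneckerMap_apply, apply_ite, Complex.conj_ofReal, map_zero,
    mul_ite, mul_zero, Finset.sum_ite_eq, Finset.mem_univ, if_true, ite_mul, zero_mul]
  simp [Finset.mul_sum]

lemma row_sum (d : ℕ) (U : Matrix (Fin d) (Fin d) ℂ)
    (hU : U ∈ Matrix.unitaryGroup (Fin d) ℂ) (i : Fin d) :
    ∑ j, ‖ (U i j)‖ ^ 2 = 1 := by
  have h := Matrix.mem_unitaryGroup_iff.mp hU
  have h1 : (U * star U) i i = (1 : Matrix (Fin d) (Fin d) ℂ) i i := by rw [h]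
  rw [Matrix.mul_apply, Matrix.one_apply_eq] at h1
  simp only [Matrix.star_apply] at h1
  have h2 : ∑ j, ((‖ (U i j)‖ ^ 2 : ℝ) : ℂ) = 1 := by
    rw [← h1]
    apply Finset.sum_congr rfl; intro j _
    rw [Complex.sq_norm]
    rw [show star (U i j) = (starRingEnd ℂ) (U i j) from rfl, Complex.mul_conj]
  exact_mod_cast h2

lemma col_sum (d : ℕ) (U : Matrix (Fin d) (Fin d) ℂ)
    (hU : U ∈ Matrix.unitaryGroup (Fin d) ℂ) (j : Fin d) :
    ∑ i, ‖ (U i j)‖ ^ 2 = 1 := by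
  have h := Matrix.mem_unitaryGroup_iff'.mp hU
  have h1 : (star U * U) j j = (1 : Matrix (Fin d) (Fin d) ℂ) j j := by rw [h]
  rw [Matrix.mul_apply, Matrix.one_apply_eq] at h1
  simp only [Matrix.star_apply] at h1
  have h2 : ∑ i, ((‖ (U i j)‖ ^ 2 : ℝ) : ℂ) = 1 := by
    rw [← h1]
    apply Finset.sum_congr rfl; intro i _
    rw [Complex.sq_norm]
    rw [show star (U i j) = (starRingEnd ℂ) (U i j) from rfl, mul_comm,
      Complex.mul_conj]
  exact_mod_cast h2

/-- the optimal fidelity for converting the pure state with ordered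
Schmidt coefficients `√(t i)` into the one with ordered Schmidt coefficients `√(r i)`
under local unitaries equals `(∑ i, √(r i * t i))²`. -/
theorem stmt_1 (d : ℕ) (hd : 1 ≤ d) (r t : Fin d → ℝ)
    (hr0 : ∀ i, 0 ≤ r i) (ht0 : ∀ i, 0 ≤ t i)
    (hr : Antitone r) (ht : Antitone t) :
    sSup {x : ℝ |
      ∃ U ∈ Matrix.unitaryGroup (Fin d) ℂ, ∃ V ∈ Matrix.unitaryGroup (Fin d) ℂ,
        x = ‖ (∑ y : Fin d × Fin d,
          (starRingEnd ℂ) (if y.1 = y.2 then (Real.sqrt (r y.1) : ℂ) else 0) *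
            ((U ⊗ₖ V) *ᵥ
              (fun z : Fin d × Fin d =>
                if z.1 = z.2 then (Real.sqrt (t z.1) : ℂ) else 0)) y)‖ ^ 2}
    = (∑ i, Real.sqrt (r i * t i)) ^ 2 := by
  set a : Fin d → ℝ := fun i => Real.sqrt (r i) with haa
  set b : Fin d → ℝ := fun i => Real.sqrt (t i) with hbb
  have ha0 : ∀ i, 0 ≤ a i := fun i => Real.sqrt_nonneg _
  have hb0 : ∀ i, 0 ≤ b i := fun i => Real.sqrt_nonneg _
  have haA : Antitone a := fun i j h => Real.sqrt_le_sqrt (hr h)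
  have hbA : Antitone b := fun i j h => Real.sqrt_le_sqrt (ht h)
  set c : ℝ := ∑ i, a i * b i with hc
  have hceq : (∑ i, Real.sqrt (r i * t i)) = c := by
    apply Finset.sum_congr rfl; intro i _
    rw [Real.sqrt_mul (hr0 i)]
  have hc0 : 0 ≤ c := Finset.sum_nonneg fun i _ => mul_nonneg (ha0 i) (hb0 i)
  rw [hceq]
  -- the upper bound, for every element of the set
  have hub : ∀ x ∈ {x : ℝ |
      ∃ U ∈ Matrix.unitaryGroup (Fin d) ℂ, ∃ V ∈ Matrix.unitaryGroup (Fin d) ℂ,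
        x = ‖ (∑ y : Fin d × Fin d,
          (starRingEnd ℂ) (if y.1 = y.2 then (Real.sqrt (r y.1) : ℂ) else 0) *
            ((U ⊗ₖ V) *ᵥ
              (fun z : Fin d × Fin d =>
                if z.1 = z.2 then (Real.sqrt (t z.1) : ℂ) else 0)) y)‖ ^ 2},
      x ≤ c ^ 2 := by
    rintro x ⟨U, hU, V, hV, rfl⟩
    rw [inner_eq]
    have habs : ‖ (∑ i, ∑ j,
        (Real.sqrt (r i) : ℂ) * (U i j * V i j * Real.sqrt (t j)))‖ ≤ c := by
      calc ‖ (∑ i, ∑ j,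
              (Real.sqrt (r i) : ℂ) * (U i j * V i j * Real.sqrt (t j)))‖
          ≤ ∑ i, ‖ (∑ j,
              (Real.sqrt (r i) : ℂ) * (U i j * V i j * Real.sqrt (t j)))‖ :=
            norm_sum_le _ _
        _ ≤ ∑ i, ∑ j, a i * b j *
              (‖ (U i j)‖ * ‖ (V i j)‖) := by
            apply Finset.sum_le_sum; intro i _
            calc ‖ (∑ j,
                    (Real.sqrt (r i) : ℂ) * (U i j * V i j * Real.sqrt (t j)))‖
                ≤ ∑ j, ‖
                    ((Real.sqrt (r i) : ℂ) * (U i j * V i j * Real.sqrt (t j)))‖ :=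
                  norm_sum_le _ _
              _ = ∑ j, a i * b j *
                    (‖ (U i j)‖ * ‖ (V i j)‖) := by
                  apply Finset.sum_congr rfl; intro j _
                  simp only [norm_mul, Complex.norm_real, Real.norm_eq_abs,
                    abs_of_nonneg (Real.sqrt_nonneg _)]
                  ring
        _ ≤ ∑ i, ∑ j, a i * b j *
              ((‖ (U i j)‖ ^ 2 + ‖ (V i j)‖ ^ 2) / 2) := by
            apply Finset.sum_le_sum; intro i _
            apply Finset.sum_le_sum; intro j _
            apply mul_le_mul_of_nonneg_left _ (mul_nonneg (ha0 i) (hb0 j))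
            nlinarith [sq_nonneg (‖ (U i j)‖ - ‖ (V i j)‖),
              norm_nonneg (U i j), norm_nonneg (V i j)]
        _ = ((∑ i, ∑ j, a i * b j * ‖ (U i j)‖ ^ 2)
              + (∑ i, ∑ j, a i * b j * ‖ (V i j)‖ ^ 2)) / 2 := by
            rw [← Finset.sum_add_distrib, Finset.sum_div]
            apply Finset.sum_congr rfl; intro i _
            rw [← Finset.sum_add_distrib, Finset.sum_div]
            apply Finset.sum_congr rfl; intro j _
            ring
        _ ≤ (c + c) / 2 := by
            apply (div_le_div_iff_of_pos_right (by norm_num : (0:ℝ) < 2)).2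
            apply add_le_add
            · exact key_fin d a b ha0 hb0 haA hbA
                (fun i j => ‖ (U i j)‖ ^ 2)
                (fun i j => sq_nonneg _)
                (fun i => le_of_eq (row_sum d U hU i))
                (fun j => le_of_eq (col_sum d U hU j))
            · exact key_fin d a b ha0 hb0 haA hbA
                (fun i j => ‖ (V i j)‖ ^ 2)
                (fun i j => sq_nonneg _)
                (fun i => le_of_eq (row_sum d V hV i))
                (fun j => le_of_eq (col_sum d V hV j))
        _ = c := by ring
    exact pow_le_pow_left₀ (norm_nonneg _) habs 2
  -- membership of c ^ 2 via U = V = 1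
  have hmem : c ^ 2 ∈ {x : ℝ |
      ∃ U ∈ Matrix.unitaryGroup (Fin d) ℂ, ∃ V ∈ Matrix.unitaryGroup (Fin d) ℂ,
        x = ‖ (∑ y : Fin d × Fin d,
          (starRingEnd ℂ) (if y.1 = y.2 then (Real.sqrt (r y.1) : ℂ) else 0) *
            ((U ⊗ₖ V) *ᵥ
              (fun z : Fin d × Fin d =>
                if z.1 = z.2 then (Real.sqrt (t z.1) : ℂ) else 0)) y)‖ ^ 2} := by
    refine ⟨1, one_mem _, 1, one_mem _, ?_⟩
    rw [inner_eq]
    have : ∑ i, ∑ j, (Real.sqrt (r i) : ℂ) *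
        ((1 : Matrix (Fin d) (Fin d) ℂ) i j * (1 : Matrix (Fin d) (Fin d) ℂ) i j
          * Real.sqrt (t j)) = (c : ℂ) := by
      rw [hc]
      push_cast
      apply Finset.sum_congr rfl; intro i _
      simp [Matrix.one_apply, ite_mul, mul_ite, Finset.sum_ite_eq, haa, hbb]
    rw [this, Complex.norm_real, Real.norm_eq_abs, abs_of_nonneg hc0]
  apply le_antisymm
  · exact Real.sSup_le hub (by positivity)
  · exact le_csSup ⟨c ^ 2, fun x hx => hub x hx⟩ hmem
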